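/- Let (L̂,[-,-]̂,{-,-,-}̂,R̂) and (L,[-,-],{-,-,-},R) be modified Rota-Baxter Lie-Yamaguti algebras, and let p : L̂ → L be a surjective linear map satisfying p([a,b]̂) = [p(a),p(b)], p({a,b,c}̂) = {p(a),p(b),p(c)} and p∘R̂ = R∘p, whose kernel V := ker(p) is abelian in the sense that [u,v]̂ = 0, {w,u,v}̂ = 0 and {u,v,w}̂ = 0 for all u,v in V and w in L̂. Let s : L → L̂ be a linear map with p∘s = id_L. Define ρ(x)u := [s(x),u]̂, θ(x,y)u := {u,s(x),s(y)}̂, D(x,y)u := {s(x),s(y),u}̂ for x,y in L and u in V, and let R_V be the restriction of R̂ to V (note R̂(V) ⊆ V since p∘R̂ = R∘p). Then ρ(x), θ(x,y), D(x,y) map V into V, and (V; ρ, θ, D, R_V) is a representation of the modified Rota-Baxter Lie-Yamaguti algebra (L,[-,-],{-,-,-},R), i.e. (R1)–(R7), (4.1) and (4.2) hold. -/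
import Mathlib


/-- A Lie-Yamaguti algebra: bilinear bracket `br`, trilinear bracket `tr`,
satisfying (LY1)-(LY6). -/
structure LieYamaguti (K : Type*) (L : Type*) [Field K] [AddCommGroup L] [Module K L] where
  br : L →ₗ[K] L →ₗ[K] L
  tr : L →ₗ[K] L →ₗ[K] L →ₗ[K] L
  ly1 : ∀ x y, br x y = - br y x
  ly2 : ∀ x y z, tr x y z = - tr y x z
  ly3 : ∀ x y z,
    br (br x y) z + br (br y z) x + br (br z x) y + tr x y z + tr y z x + tr z x y = 0
  ly4 : ∀ x y z a, tr (br x y) z a + tr (br z x) y a + tr (br y z) x a = 0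
  ly5 : ∀ a b x y, tr a b (br x y) = br (tr a b x) y + br x (tr a b y)
  ly6 : ∀ a b x y z,
    tr a b (tr x y z) = tr (tr a b x) y z + tr x (tr a b y) z + tr x y (tr a b z)

/-- A modified Rota-Baxter operator on a Lie-Yamaguti algebra. -/
def IsMRB {K L : Type*} [Field K] [AddCommGroup L] [Module K L]
    (A : LieYamaguti K L) (R : L →ₗ[K] L) : Prop :=
  (∀ x y, A.br (R x) (R y) = R (A.br (R x) y + A.br x (R y)) - A.br x y) ∧
  (∀ x y z, A.tr (R x) (R y) (R z) =
      R (A.tr x (R y) (R z) + A.tr (R x) y (R z) + A.tr (R x) (R y) z + A.tr x y z)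
      - A.tr (R x) y z - A.tr x (R y) z - A.tr x y (R z))

/-- Any abelian extension `0 → V → L̂ → L → 0` of a modified Rota-Baxter Lie-Yamaguti
algebra, with a section `s`, induces a representation of `(L,R)` on `V = ker p`:
`ρ(x)u := [s(x),u]`, `θ(x,y)u := {u,s(x),s(y)}`, `D(x,y)u := {s(x),s(y),u}` map `V` to
`V`, `R̂` restricts to `V`, and (R1)-(R7), (4.1), (4.2) hold. -/
theorem abelianExtension_inducedRep (K Lh L : Type*) [Field K] [CharZero K]
    [AddCommGroup Lh] [Module K Lh] [AddCommGroup L] [Module K L]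
    (Ah : LieYamaguti K Lh) (A : LieYamaguti K L)
    (Rh : Lh →ₗ[K] Lh) (R : L →ₗ[K] L)
    (hRh : IsMRB Ah Rh) (hR : IsMRB A R)
    (p : Lh →ₗ[K] L) (hsurj : Function.Surjective p)
    (hpb : ∀ a b, p (Ah.br a b) = A.br (p a) (p b))
    (hpt : ∀ a b c, p (Ah.tr a b c) = A.tr (p a) (p b) (p c))
    (hpR : ∀ a, p (Rh a) = R (p a))
    (hab1 : ∀ u v, p u = 0 → p v = 0 → Ah.br u v = 0)
    (hab2 : ∀ w u v, p u = 0 → p v = 0 → Ah.tr w u v = 0)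
    (hab3 : ∀ u v w, p u = 0 → p v = 0 → Ah.tr u v w = 0)
    (s : L →ₗ[K] Lh) (hs : ∀ x, p (s x) = x) :
    ∀ (ρ : L → Lh → Lh) (θ D : L → L → Lh → Lh),
      (∀ x u, ρ x u = Ah.br (s x) u) →
      (∀ x y u, θ x y u = Ah.tr u (s x) (s y)) →
      (∀ x y u, D x y u = Ah.tr (s x) (s y) u) →
      (∀ x u, p u = 0 → p (ρ x u) = 0) ∧
      (∀ x y u, p u = 0 → p (θ x y u) = 0) ∧
      (∀ x y u, p u = 0 → p (D x y u) = 0) ∧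
      (∀ u, p u = 0 → p (Rh u) = 0) ∧
      (∀ x y u, p u = 0 →
        D x y u - θ y x u + θ x y u + ρ (A.br x y) u - ρ x (ρ y u) + ρ y (ρ x u) = 0) ∧
      (∀ x y z u, p u = 0 →
        D (A.br x y) z u + D (A.br y z) x u + D (A.br z x) y u = 0) ∧
      (∀ x y a u, p u = 0 →
        θ (A.br x y) a u = θ x a (ρ y u) - θ y a (ρ x u)) ∧
      (∀ a b x u, p u = 0 →
        D a b (ρ x u) = ρ x (D a b u) + ρ (A.tr a b x) u) ∧
      (∀ x a b u, p u = 0 →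
        θ x (A.br a b) u = ρ a (θ x b u) - ρ b (θ x a u)) ∧
      (∀ a b x y u, p u = 0 →
        D a b (θ x y u) = θ x y (D a b u) + θ (A.tr a b x) y u + θ x (A.tr a b y) u) ∧
      (∀ a x y z u, p u = 0 →
        θ a (A.tr x y z) u = θ y z (θ a x u) - θ x z (θ a y u) + D x y (θ a z u)) ∧
      (∀ x u, p u = 0 →
        ρ (R x) (Rh u) = Rh (ρ (R x) u + ρ x (Rh u)) - ρ x u) ∧
      (∀ x y u, p u = 0 →
        θ (R x) (R y) (Rh u)
          = Rh (θ (R x) (R y) u + θ (R x) y (Rh u) + θ x (R y) (Rh u) + θ x y u)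
            - θ (R x) y u - θ x y (Rh u) - θ x (R y) u) := by
  intro ρ θ D hρ hθ hD
  -- kernel basics
  have kp : ∀ a b : Lh, p a = p b → p (a - b) = 0 := by
    intro a b h; rw [map_sub, h, sub_self]
  have k13 : ∀ u b v, p u = 0 → p v = 0 → Ah.tr u b v = 0 := by
    intro u b v hu hv
    rw [Ah.ly2 u b v, hab2 b u v hu hv, neg_zero]
  -- substitution lemmas
  have tr1 : ∀ u a a' b b', p u = 0 → p a = p a' → p b = p b' →
      Ah.tr u a b = Ah.tr u a' b' := by
    intro u a a' b b' hu ha hb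
    have h1 : Ah.tr u (a - a') b = 0 := hab3 u (a - a') b hu (kp _ _ ha)
    have h2 : Ah.tr u a' (b - b') = 0 := k13 u a' (b - b') hu (kp _ _ hb)
    rw [map_sub, LinearMap.sub_apply, sub_eq_zero] at h1
    rw [map_sub, sub_eq_zero] at h2
    rw [h1, h2]
  have tr3 : ∀ a a' b b' u, p u = 0 → p a = p a' → p b = p b' →
      Ah.tr a b u = Ah.tr a' b' u := by
    intro a a' b b' u hu ha hb
    have h1 : Ah.tr (a - a') b u = 0 := k13 (a - a') b u (kp _ _ ha) hu
    have h2 : Ah.tr a' (b - b') u = 0 := hab2 a' (b - b') u (kp _ _ hb) hu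
    rw [map_sub, LinearMap.sub_apply, LinearMap.sub_apply, sub_eq_zero] at h1
    rw [map_sub, LinearMap.sub_apply, sub_eq_zero] at h2
    rw [h1, h2]
  have br2 : ∀ a a' u, p u = 0 → p a = p a' → Ah.br a u = Ah.br a' u := by
    intro a a' u hu ha
    have h1 : Ah.br (a - a') u = 0 := hab1 (a - a') u (kp _ _ ha) hu
    rw [map_sub, LinearMap.sub_apply, sub_eq_zero] at h1
    exact h1
  have hRker : ∀ u : Lh, p u = 0 → p (Rh u) = 0 := by
    intro u hu; rw [hpR, hu, map_zero]
  refine ⟨?_, ?_, ?_, hRker, ?_, ?_, ?_, ?_, ?_, ?_, ?_, ?_, ?_⟩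
  · intro x u hu; rw [hρ, hpb, hu, map_zero]
  · intro x y u hu
    rw [hθ, hpt, hu]
    simp
  · intro x y u hu
    rw [hD, hpt, hu]
    simp
  · -- (R1)
    intro x y u hu
    simp only [hρ, hθ, hD]
    have e1 : Ah.br (s (A.br x y)) u = Ah.br (Ah.br (s x) (s y)) u :=
      br2 _ _ u hu (by simp [hs, hpb])
    have h3 := Ah.ly3 (s x) (s y) u
    rw [e1, Ah.ly2 u (s y) (s x), Ah.ly1 (s x) (Ah.br (s y) u),
      Ah.ly1 (s y) (Ah.br (s x) u), Ah.ly1 (s x) u]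
    simp only [map_neg, LinearMap.neg_apply]
    rw [← h3]
    abel
  · -- (R2)
    intro x y z u hu
    simp only [hD]
    have e1 : Ah.tr (s (A.br x y)) (s z) u = Ah.tr (Ah.br (s x) (s y)) (s z) u :=
      tr3 _ _ _ _ u hu (by simp [hs, hpb]) rfl
    have e2 : Ah.tr (s (A.br y z)) (s x) u = Ah.tr (Ah.br (s y) (s z)) (s x) u :=
      tr3 _ _ _ _ u hu (by simp [hs, hpb]) rfl
    have e3 : Ah.tr (s (A.br z x)) (s y) u = Ah.tr (Ah.br (s z) (s x)) (s y) u :=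
      tr3 _ _ _ _ u hu (by simp [hs, hpb]) rfl
    have h4 := Ah.ly4 (s x) (s y) (s z) u
    rw [e1, e2, e3, ← h4]
    abel
  · -- (R3)
    intro x y a u hu
    simp only [hθ, hρ]
    have e1 : Ah.tr u (s (A.br x y)) (s a) = Ah.tr u (Ah.br (s x) (s y)) (s a) :=
      tr1 u _ _ _ _ hu (by simp [hs, hpb]) rfl
    have h4 := Ah.ly4 (s y) u (s x) (s a)
    rw [e1, Ah.ly2 u (Ah.br (s x) (s y)) (s a), Ah.ly1 (s x) u]
    simp only [map_neg, LinearMap.neg_apply]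
    rw [eq_comm, ← sub_eq_zero, ← h4]
    abel
  · -- (R4)
    intro a b x u hu
    simp only [hD, hρ]
    have e1 : Ah.br (s (A.tr a b x)) u = Ah.br (Ah.tr (s a) (s b) (s x)) u :=
      br2 _ _ u hu (by simp [hs, hpt])
    have h5 := Ah.ly5 (s a) (s b) (s x) u
    rw [e1, h5]
    abel
  · -- (R5)
    intro x a b u hu
    simp only [hθ, hρ]
    have e1 : Ah.tr u (s x) (s (A.br a b)) = Ah.tr u (s x) (Ah.br (s a) (s b)) :=
      tr1 u _ _ _ _ hu rfl (by simp [hs, hpb])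
    have h5 := Ah.ly5 u (s x) (s a) (s b)
    rw [e1, h5, Ah.ly1 (Ah.tr u (s x) (s a)) (s b)]
    abel
  · -- (R6)
    intro a b x y u hu
    simp only [hD, hθ]
    have e1 : Ah.tr u (s (A.tr a b x)) (s y)
        = Ah.tr u (Ah.tr (s a) (s b) (s x)) (s y) :=
      tr1 u _ _ _ _ hu (by simp [hs, hpt]) rfl
    have e2 : Ah.tr u (s x) (s (A.tr a b y))
        = Ah.tr u (s x) (Ah.tr (s a) (s b) (s y)) :=
      tr1 u _ _ _ _ hu rfl (by simp [hs, hpt])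
    have h6 := Ah.ly6 (s a) (s b) u (s x) (s y)
    rw [e1, e2, h6]
  · -- (R7)
    intro a x y z u hu
    simp only [hθ, hD]
    have e1 : Ah.tr u (s a) (s (A.tr x y z))
        = Ah.tr u (s a) (Ah.tr (s x) (s y) (s z)) :=
      tr1 u _ _ _ _ hu rfl (by simp [hs, hpt])
    have h6 := Ah.ly6 u (s a) (s x) (s y) (s z)
    rw [e1, h6, Ah.ly2 (s x) (Ah.tr u (s a) (s y)) (s z)]
    abel
  · -- (4.1)
    intro x u hu
    have hu' : p (Rh u) = 0 := hRker u hu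
    simp only [hρ]
    have e1 : Ah.br (s (R x)) (Rh u) = Ah.br (Rh (s x)) (Rh u) :=
      br2 _ _ _ hu' (by simp [hs, hpR])
    have e2 : Ah.br (s (R x)) u = Ah.br (Rh (s x)) u :=
      br2 _ _ _ hu (by simp [hs, hpR])
    rw [e1, e2, hRh.1 (s x) u]
  · -- (4.2)
    intro x y u hu
    have hu' : p (Rh u) = 0 := hRker u hu
    simp only [hθ]
    have psx : p (s (R x)) = p (Rh (s x)) := by simp [hs, hpR]
    have psy : p (s (R y)) = p (Rh (s y)) := by simp [hs, hpR]
    have e1 : Ah.tr (Rh u) (s (R x)) (s (R y))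
        = Ah.tr (Rh u) (Rh (s x)) (Rh (s y)) := tr1 _ _ _ _ _ hu' psx psy
    have e2 : Ah.tr u (s (R x)) (s (R y))
        = Ah.tr u (Rh (s x)) (Rh (s y)) := tr1 _ _ _ _ _ hu psx psy
    have e3 : Ah.tr (Rh u) (s (R x)) (s y)
        = Ah.tr (Rh u) (Rh (s x)) (s y) := tr1 _ _ _ _ _ hu' psx rfl
    have e4 : Ah.tr (Rh u) (s x) (s (R y))
        = Ah.tr (Rh u) (s x) (Rh (s y)) := tr1 _ _ _ _ _ hu' rfl psy
    have e5 : Ah.tr u (s (R x)) (s y)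
        = Ah.tr u (Rh (s x)) (s y) := tr1 _ _ _ _ _ hu psx rfl
    have e6 : Ah.tr u (s x) (s (R y))
        = Ah.tr u (s x) (Rh (s y)) := tr1 _ _ _ _ _ hu rfl psy
    have einner : Ah.tr u (Rh (s x)) (Rh (s y)) + Ah.tr (Rh u) (s x) (Rh (s y))
          + Ah.tr (Rh u) (Rh (s x)) (s y) + Ah.tr u (s x) (s y)
        = Ah.tr u (Rh (s x)) (Rh (s y)) + Ah.tr (Rh u) (Rh (s x)) (s y)
          + Ah.tr (Rh u) (s x) (Rh (s y)) + Ah.tr u (s x) (s y) := by abel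
    rw [e1, e2, e3, e4, e5, e6, hRh.2 u (s x) (s y), einner]
    abel
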